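/- For every k ≥ 1, the rank over F_2 of the self-orthogonality matrix SO_k equals k(k+1)/2; equivalently, the k(k+1)/2 functions v ↦ v_i v_j on F_2^k \ {0}, indexed by pairs 1 ≤ i ≤ j ≤ k, are linearly independent over F_2. -/

import Mathlib

open Finset

/-- The rank of the self-orthogonality matrix SO_k is k(k+1)/2; equivalently,
the functions v ↦ v i * v j on F_2^k \ {0}, indexed by pairs i ≤ j, are
linearly independent over F_2. -/
theorem stmt_8 (k : ℕ) (hk : 1 ≤ k) :
    (Matrix.of (fun (p : {p : Fin k × Fin k // p.1 ≤ p.2})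
        (v : {v : Fin k → ZMod 2 // v ≠ 0}) => v.1 p.1.1 * v.1 p.1.2)).rank
      = k * (k + 1) / 2 ∧
    LinearIndependent (ZMod 2)
      (fun (p : {p : Fin k × Fin k // p.1 ≤ p.2}) =>
        fun v : {v : Fin k → ZMod 2 // v ≠ 0} => v.1 p.1.1 * v.1 p.1.2) := by
  set f : {p : Fin k × Fin k // p.1 ≤ p.2} → ({v : Fin k → ZMod 2 // v ≠ 0} → ZMod 2) :=
    fun p v => v.1 p.1.1 * v.1 p.1.2 with hf
  -- linear independence
  have hli : LinearIndependent (ZMod 2) f := by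
    rw [Fintype.linearIndependent_iff]
    intro g hg
    have hev : ∀ (v : Fin k → ZMod 2), v ≠ 0 →
        ∑ p : {p : Fin k × Fin k // p.1 ≤ p.2}, g p * (v p.1.1 * v p.1.2) = 0 := by
      intro v hv
      have := congrFun hg ⟨v, hv⟩
      simpa [hf, Finset.sum_apply, smul_eq_mul] using this
    have hdiag : ∀ i : Fin k, g ⟨(i, i), le_refl i⟩ = 0 := by
      intro i
      have hv : (Pi.single i (1 : ZMod 2) : Fin k → ZMod 2) ≠ 0 := by
        intro h
        have := congrFun h i
        simp at this
      have := hev _ hv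
      rw [Finset.sum_eq_single (⟨(i, i), le_refl i⟩ :
          {p : Fin k × Fin k // p.1 ≤ p.2})] at this
      · simpa using this
      · intro p _ hp
        have : p.1.1 ≠ i ∨ p.1.2 ≠ i := by
          by_contra h
          push_neg at h
          exact hp (Subtype.ext (Prod.ext h.1 h.2))
        rcases this with h | h <;> simp [Pi.single_apply, h]
      · intro h; exact absurd (Finset.mem_univ _) h
    intro p
    obtain ⟨⟨i, j⟩, hij⟩ := p
    rcases eq_or_lt_of_le hij with heq | hlt
    · have h' : i = j := heq
      subst h'
      exact hdiag i
    · -- v is indicator of {i, j}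
      set v : Fin k → ZMod 2 := fun a => if a = i ∨ a = j then 1 else 0 with hvdef
      have hv : v ≠ 0 := by
        intro h
        have := congrFun h i
        simp [hvdef] at this
      have hsum := hev v hv
      have hne : i ≠ j := Fin.ne_of_lt hlt
      set S : Finset {p : Fin k × Fin k // p.1 ≤ p.2} :=
        {⟨(i, i), le_refl i⟩, ⟨(j, j), le_refl j⟩, ⟨(i, j), hij⟩} with hS
      have hzero : ∀ p : {p : Fin k × Fin k // p.1 ≤ p.2}, p ∉ S →
          g p * (v p.1.1 * v p.1.2) = 0 := by
        intro p hp
        have : ¬((p.1.1 = i ∨ p.1.1 = j) ∧ (p.1.2 = i ∨ p.1.2 = j)) := by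
          rintro ⟨h1 | h1, h2 | h2⟩
          · exact hp (by simp [hS, Subtype.ext_iff, Prod.ext_iff, h1, h2])
          · exact hp (by simp [hS, Subtype.ext_iff, Prod.ext_iff, h1, h2])
          · -- p.1.1 = j, p.1.2 = i, but p.1.1 ≤ p.1.2 gives j ≤ i, contradiction
            have := p.2
            rw [h1, h2] at this
            exact absurd this (not_le.mpr hlt)
          · exact hp (by simp [hS, Subtype.ext_iff, Prod.ext_iff, h1, h2])
        rcases not_and_or.mp this with h | h <;>
          simp [hvdef, h, mul_comm]
      have hSsum : ∑ p ∈ S, g p * (v p.1.1 * v p.1.2) = 0 := by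
        rw [Finset.sum_subset (Finset.subset_univ S) (fun x _ hx => hzero x hx)]
        exact hsum
      have h1 : (⟨(i, i), le_refl i⟩ : {p : Fin k × Fin k // p.1 ≤ p.2}) ≠
          ⟨(j, j), le_refl j⟩ := by simp [Subtype.ext_iff, Prod.ext_iff, hne]
      have h2 : (⟨(i, i), le_refl i⟩ : {p : Fin k × Fin k // p.1 ≤ p.2}) ≠
          ⟨(i, j), hij⟩ := by simp [Subtype.ext_iff, Prod.ext_iff, hne]
      have h3 : (⟨(j, j), le_refl j⟩ : {p : Fin k × Fin k // p.1 ≤ p.2}) ≠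
          ⟨(i, j), hij⟩ := by simp [Subtype.ext_iff, Prod.ext_iff, hne.symm]
      rw [hS, Finset.sum_insert (by simp [h1, h2]), Finset.sum_insert (by simp [h3]),
        Finset.sum_singleton] at hSsum
      simp only [hvdef] at hSsum
      rw [hdiag i, hdiag j] at hSsum
      simpa [hne] using hSsum
  refine ⟨?_, hli⟩
  -- rank
  have hcard : Fintype.card {p : Fin k × Fin k // p.1 ≤ p.2} = k * (k + 1) / 2 := by
    have e : {p : Fin k × Fin k // p.1 ≤ p.2} ≃ (Σ j : Fin k, Fin (j.1 + 1)) :=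
      { toFun := fun p => ⟨p.1.2, ⟨p.1.1.1, Nat.lt_succ_of_le p.2⟩⟩
        invFun := fun s => ⟨(⟨s.2.1, lt_of_le_of_lt (Nat.lt_succ_iff.mp s.2.2) s.1.2⟩, s.1),
          Nat.lt_succ_iff.mp s.2.2⟩
        left_inv := fun p => by ext <;> rfl
        right_inv := fun s => by rfl }
    rw [Fintype.card_congr e, Fintype.card_sigma]
    simp only [Fintype.card_fin]
    rw [Fin.sum_univ_eq_sum_range (fun i => i + 1) k]
    have : ∑ i ∈ Finset.range k, (i + 1) = ∑ i ∈ Finset.range (k + 1), i := by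
      rw [Finset.sum_range_succ' (fun i => i) k]
      simp
    rw [this, Finset.sum_range_id]
    simp [Nat.mul_comm]
  rw [← Matrix.rank_transpose, Matrix.rank_eq_finrank_span_cols]
  show Module.finrank (ZMod 2) (Submodule.span (ZMod 2) (Set.range f)) = _
  have : Set.range (Matrix.of fun p (v : {v : Fin k → ZMod 2 // v ≠ 0}) =>
      v.1 p.1.1 * v.1 p.1.2 : Matrix {p : Fin k × Fin k // p.1 ≤ p.2} _ (ZMod 2))
      = Set.range f := rfl
  rw [finrank_span_eq_card hli, hcard]
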